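/- Let r ≥ 2 and n ≥ max{8, 2r+1}, let Ω_S be the set of all 2r-regular simple graphs on vertex set {1,…,n} and Ω_F the subset of connected such graphs, and let h : Ω_S → Ω_F be the chaining map. Then h(G_S) is connected and 2r-regular for every G_S ∈ Ω_S, and h is a surjection onto Ω_F. -/

import Mathlib

open scoped Classical

noncomputable section

/-- The entry vertex of a connected component: its highest-labelled vertex. -/
def entry {n : ℕ} (G : SimpleGraph (Fin n)) (C : G.ConnectedComponent) : Fin n :=
  (Set.toFinite C.supp).toFinset.max' (by
    obtain ⟨w, hw⟩ := C.exists_rep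
    exact ⟨w, by
      simp only [Set.Finite.mem_toFinset, SimpleGraph.ConnectedComponent.mem_supp_iff]
      exact hw⟩)

/-- The exit vertex of a connected component: the highest-labelled neighbour of its
entry vertex. -/
def exitV {n : ℕ} (G : SimpleGraph (Fin n)) (C : G.ConnectedComponent) : Fin n :=
  ((Set.toFinite (G.neighborSet (entry G C))).toFinset.max).getD (entry G C)

/-- The cyclic successor of a component in the ordering of components by entry vertex:
the component with least entry vertex among those with a larger entry vertex, wrapping
around to the component with the overall least entry vertex. -/
def nextComp {n : ℕ} (G : SimpleGraph (Fin n)) (C : G.ConnectedComponent) :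
    G.ConnectedComponent :=
  letI : Fintype G.ConnectedComponent := Fintype.ofFinite _
  let bigger : Finset G.ConnectedComponent :=
    Finset.univ.filter fun D => entry G C < entry G D
  if hb : bigger.Nonempty then
    G.connectedComponentMk ((bigger.image (entry G)).min' (hb.image _))
  else
    G.connectedComponentMk
      (((Finset.univ : Finset G.ConnectedComponent).image (entry G)).min'
        (by
          have : (Finset.univ : Finset G.ConnectedComponent).Nonempty :=
            ⟨C, Finset.mem_univ C⟩
          exact this.image _))

/-- The chaining map `h`: delete the bridge edge (entry–exit) of every component, and
add the chain edges from the exit vertex of each component to the entry vertex of the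
next component in the cyclic order of components by entry vertex.  (For a connected
graph this returns the graph itself.) -/
def chainMap {n : ℕ} (G : SimpleGraph (Fin n)) : SimpleGraph (Fin n) :=
  (G.deleteEdges {e | ∃ C : G.ConnectedComponent, e = s(entry G C, exitV G C)}) ⊔
    SimpleGraph.fromEdgeSet
      {e | ∃ C : G.ConnectedComponent, e = s(exitV G C, entry G (nextComp G C))}

namespace ChainAux

open SimpleGraph Finset

variable {n : ℕ} {G : SimpleGraph (Fin n)}

lemma entry_mk (C : G.ConnectedComponent) : G.connectedComponentMk (entry G C) = C := by
  have := Finset.max'_mem (Set.toFinite C.supp).toFinset (by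
    obtain ⟨w, hw⟩ := C.exists_rep
    exact ⟨w, by simp only [Set.Finite.mem_toFinset, SimpleGraph.ConnectedComponent.mem_supp_iff]; exact hw⟩)
  rw [Set.Finite.mem_toFinset, SimpleGraph.ConnectedComponent.mem_supp_iff] at this
  exact this

lemma entry_mem_supp (C : G.ConnectedComponent) : entry G C ∈ C.supp := by
  rw [SimpleGraph.ConnectedComponent.mem_supp_iff]; exact entry_mk C

lemma le_entry {C : G.ConnectedComponent} {v : Fin n} (h : v ∈ C.supp) : v ≤ entry G C := by
  apply Finset.le_max'
  rwa [Set.Finite.mem_toFinset]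

lemma entry_injective : Function.Injective (entry G) := by
  intro C D h
  rw [← entry_mk (G := G) C, ← entry_mk (G := G) D, h]

lemma entry_cc_eq {x : Fin n} {s : Finset G.ConnectedComponent}
    (h : x ∈ s.image (entry G)) : entry G (G.connectedComponentMk x) = x := by
  obtain ⟨D, _, rfl⟩ := Finset.mem_image.mp h
  rw [entry_mk]

instance : Finite G.ConnectedComponent :=
  Finite.of_surjective (G.connectedComponentMk) (fun C => C.exists_rep)

lemma entry_nextComp_big {C : G.ConnectedComponent}
    (hb : ∃ D : G.ConnectedComponent, entry G C < entry G D) :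
    entry G C < entry G (nextComp G C) ∧
      ∀ D, entry G C < entry G D → entry G (nextComp G C) ≤ entry G D := by
  letI : Fintype G.ConnectedComponent := Fintype.ofFinite _
  obtain ⟨D0, hD0⟩ := hb
  have hbig : (Finset.univ.filter fun D => entry G C < entry G D).Nonempty :=
    ⟨D0, by simp [hD0]⟩
  rw [nextComp, dif_pos hbig]
  have hmem := Finset.min'_mem _ (hbig.image (entry G))
  rw [entry_cc_eq hmem]
  constructor
  · obtain ⟨D, hD, hDe⟩ := Finset.mem_image.mp hmem
    rw [Finset.mem_filter] at hD
    rw [← hDe]; exact hD.2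
  · intro D hD
    exact Finset.min'_le _ _ (Finset.mem_image_of_mem _ (by simp [hD]))

lemma entry_nextComp_min {C : G.ConnectedComponent}
    (hb : ¬ ∃ D : G.ConnectedComponent, entry G C < entry G D) :
    ∀ D, entry G (nextComp G C) ≤ entry G D := by
  letI : Fintype G.ConnectedComponent := Fintype.ofFinite _
  have hbig : ¬ (Finset.univ.filter fun D => entry G C < entry G D).Nonempty := by
    rintro ⟨D, hD⟩
    rw [Finset.mem_filter] at hD
    exact hb ⟨D, hD.2⟩
  rw [nextComp, dif_neg hbig]
  have hne' : (Finset.univ : Finset G.ConnectedComponent).Nonempty := ⟨C, Finset.mem_univ C⟩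
  intro D
  calc entry G (G.connectedComponentMk
        (((Finset.univ : Finset G.ConnectedComponent).image (entry G)).min' (hne'.image _)))
      = ((Finset.univ : Finset G.ConnectedComponent).image (entry G)).min' (hne'.image _) :=
        entry_cc_eq (Finset.min'_mem _ _)
    _ ≤ entry G D := Finset.min'_le _ _ (Finset.mem_image_of_mem _ (Finset.mem_univ D))

lemma nextComp_ne {C : G.ConnectedComponent} (h2 : ∃ D : G.ConnectedComponent, D ≠ C) :
    nextComp G C ≠ C := by
  by_cases hb : ∃ D : G.ConnectedComponent, entry G C < entry G D
  · intro h
    have := (entry_nextComp_big hb).1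
    rw [h] at this
    exact lt_irrefl _ this
  · intro h
    obtain ⟨D, hD⟩ := h2
    have h1 : entry G (nextComp G C) ≤ entry G D := entry_nextComp_min hb D
    rw [h] at h1
    push_neg at hb
    have h3 : entry G D ≠ entry G C := fun he => hD (entry_injective he)
    exact h3 (le_antisymm (hb D) h1)

lemma nextComp_injective : Function.Injective (nextComp G) := by
  have aux : ∀ C1 C2 : G.ConnectedComponent,
      entry G C1 < entry G C2 → nextComp G C1 ≠ nextComp G C2 := by
    intro C1 C2 h heq
    have hb1 := entry_nextComp_big (C := C1) ⟨C2, h⟩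
    have hle : entry G (nextComp G C1) ≤ entry G C2 := hb1.2 C2 h
    by_cases hb2 : ∃ D : G.ConnectedComponent, entry G C2 < entry G D
    · have := (entry_nextComp_big hb2).1
      rw [← heq] at this
      exact absurd (lt_of_le_of_lt hle this) (lt_irrefl _)
    · have := entry_nextComp_min hb2 C1
      rw [← heq] at this
      exact absurd (lt_of_le_of_lt this hb1.1) (lt_irrefl _)
  intro C1 C2 h
  rcases lt_trichotomy (entry G C1) (entry G C2) with hlt | heq | hgt
  · exact absurd h (aux _ _ hlt)
  · exact entry_injective heq
  · exact absurd h.symm (aux _ _ hgt)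

lemma nextComp_surjective : Function.Surjective (nextComp G) :=
  Finite.surjective_of_injective nextComp_injective

lemma exit_adj (hne : ∀ v : Fin n, (G.neighborSet v).Nonempty) (C : G.ConnectedComponent) : G.Adj (entry G C) (exitV G C) := by
  have hnonempty : ((Set.toFinite (G.neighborSet (entry G C))).toFinset).Nonempty := by
    obtain ⟨w, hw⟩ := hne (entry G C)
    exact ⟨w, by rwa [Set.Finite.mem_toFinset]⟩
  have hmax : ((Set.toFinite (G.neighborSet (entry G C))).toFinset).max
      = (((Set.toFinite (G.neighborSet (entry G C))).toFinset).max' hnonempty : Fin n) :=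
    (Finset.coe_max' hnonempty).symm
  have hmem := Finset.max'_mem _ hnonempty
  rw [Set.Finite.mem_toFinset, SimpleGraph.mem_neighborSet] at hmem
  have : exitV G C = ((Set.toFinite (G.neighborSet (entry G C))).toFinset).max' hnonempty := by
    rw [exitV, hmax]; rfl
  rw [this]; exact hmem

lemma exit_mk (hne : ∀ v : Fin n, (G.neighborSet v).Nonempty) (C : G.ConnectedComponent) : G.connectedComponentMk (exitV G C) = C := by
  have h := exit_adj hne C
  have : G.connectedComponentMk (entry G C) = G.connectedComponentMk (exitV G C) :=
    SimpleGraph.ConnectedComponent.connectedComponentMk_eq_of_adj h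
  rw [← this, entry_mk]

lemma exit_mem_supp (hne : ∀ v : Fin n, (G.neighborSet v).Nonempty) (C : G.ConnectedComponent) : exitV G C ∈ C.supp := by
  rw [SimpleGraph.ConnectedComponent.mem_supp_iff]; exact exit_mk hne C

lemma exit_ne_entry (hne : ∀ v : Fin n, (G.neighborSet v).Nonempty) (C : G.ConnectedComponent) : exitV G C ≠ entry G C :=
  fun h => (G.irrefl) (h ▸ (exit_adj hne C).symm)

lemma reachable_deleteEdge (heven : ∀ v : Fin n, Even (G.degree v)) {a b : Fin n}
    (hab : G.Adj a b) : (G.deleteEdges {s(a, b)}).Reachable a b := by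
  by_contra hr
  set G' := G.deleteEdges {s(a, b)} with hG'
  have c1 : ∀ u v : Fin n, G'.Adj u v ↔ (G.Adj u v ∧ s(u, v) ≠ s(a, b)) := by
    intro u v
    rw [hG', SimpleGraph.deleteEdges_adj]
    simp
  let G'' : SimpleGraph (Fin n) :=
    { Adj := fun u v => G'.Adj u v ∧ G'.Reachable a u
      symm := ⟨fun u v h => ⟨h.1.symm, h.2.trans h.1.reachable⟩⟩
      loopless := ⟨fun u h => G'.irrefl h.1⟩ }
  have hG''adj : ∀ u v : Fin n, G''.Adj u v ↔ (G'.Adj u v ∧ G'.Reachable a u) := fun _ _ => Iff.rfl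
  have c2 : ∀ v : Fin n, v ≠ a → v ≠ b → G'.neighborFinset v = G.neighborFinset v := by
    intro v hva hvb
    ext u
    rw [mem_neighborFinset, mem_neighborFinset, c1]
    constructor
    · exact fun h => h.1
    · intro h
      refine ⟨h, fun hc => ?_⟩
      rw [Sym2.eq_iff] at hc
      rcases hc with ⟨h1, _⟩ | ⟨h2, _⟩
      · exact hva h1
      · exact hvb h2
  have c3 : G'.neighborFinset a = (G.neighborFinset a).erase b := by
    ext u
    rw [mem_neighborFinset, Finset.mem_erase, mem_neighborFinset, c1]
    constructor
    · intro h
      exact ⟨fun hc => h.2 (by rw [hc]), h.1⟩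
    · intro h
      refine ⟨h.2, fun hc => ?_⟩
      rw [Sym2.eq_iff] at hc
      rcases hc with ⟨_, h2⟩ | ⟨h1, _⟩
      · exact h.1 h2
      · exact hab.ne h1
  have c4 : Odd (G'.degree a) := by
    rw [← SimpleGraph.card_neighborFinset_eq_degree, c3,
      Finset.card_erase_of_mem (by rwa [mem_neighborFinset]),
      SimpleGraph.card_neighborFinset_eq_degree]
    refine Nat.Even.sub_odd ?_ (heven a) odd_one
    rw [← SimpleGraph.card_neighborFinset_eq_degree]
    exact Finset.card_pos.mpr ⟨b, by rwa [mem_neighborFinset]⟩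
  have c5 : ∀ v : Fin n, G''.neighborFinset v =
      if G'.Reachable a v then G'.neighborFinset v else ∅ := by
    intro v
    split_ifs with h
    · ext u; simp only [mem_neighborFinset, hG''adj]; exact ⟨fun x => x.1, fun x => ⟨x, h⟩⟩
    · ext u; simp only [mem_neighborFinset, hG''adj, Finset.notMem_empty, iff_false]
      exact fun x => h x.2
  have c6 : (Finset.univ.filter fun v => Odd (G''.degree v)) = {a} := by
    ext v
    simp only [Finset.mem_filter, Finset.mem_univ, true_and, Finset.mem_singleton]
    constructor
    · intro hodd
      rw [← SimpleGraph.card_neighborFinset_eq_degree, c5] at hodd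
      split_ifs at hodd with hreach
      · by_contra hva
        have hvb : v ≠ b := fun h => hr (h ▸ hreach)
        rw [c2 v hva hvb, SimpleGraph.card_neighborFinset_eq_degree] at hodd
        exact (Nat.not_even_iff_odd.mpr hodd) (heven v)
      · simp at hodd
    · intro h
      rw [h]
      rw [← SimpleGraph.card_neighborFinset_eq_degree, c5,
        if_pos (SimpleGraph.Reachable.refl a), SimpleGraph.card_neighborFinset_eq_degree]
      exact c4
  have := SimpleGraph.even_card_odd_degree_vertices G''
  rw [c6] at this
  simp at this

lemma chainMap_adj {a b : Fin n} : (chainMap G).Adj a b ↔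
    (G.Adj a b ∧ ¬∃ C : G.ConnectedComponent, s(a, b) = s(entry G C, exitV G C)) ∨
      ((∃ C : G.ConnectedComponent, s(a, b) = s(exitV G C, entry G (nextComp G C))) ∧ a ≠ b) := by
  simp only [chainMap, SimpleGraph.sup_adj, SimpleGraph.deleteEdges_adj,
    SimpleGraph.fromEdgeSet_adj, Set.mem_setOf_eq]

lemma reach_entry_exit (hne : ∀ v : Fin n, (G.neighborSet v).Nonempty) (heven : ∀ v : Fin n, Even (G.degree v)) (C : G.ConnectedComponent) :
    (chainMap G).Reachable (entry G C) (exitV G C) := by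
  obtain ⟨w⟩ := reachable_deleteEdge heven (exit_adj hne C)
  refine ⟨w.transfer _ fun e he => ?_⟩
  revert he
  refine Sym2.ind (fun p q => ?_) e
  intro he
  have hpq : s(p, q) ∈ (G.deleteEdges {s(entry G C, exitV G C)}).edgeSet :=
    w.edges_subset_edgeSet he
  rw [SimpleGraph.mem_edgeSet, SimpleGraph.deleteEdges_adj] at hpq
  obtain ⟨hadj, hnd⟩ := hpq
  simp only [Set.mem_singleton_iff] at hnd
  have hp : p ∈ w.support := w.fst_mem_support_of_mem_edges he
  have hccp : G.connectedComponentMk p = C := by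
    have : (G.deleteEdges {s(entry G C, exitV G C)}).Reachable (entry G C) p :=
      ⟨w.takeUntil p hp⟩
    have h2 : G.Reachable (entry G C) p := this.mono (SimpleGraph.deleteEdges_le _)
    rw [← entry_mk C]
    exact (SimpleGraph.ConnectedComponent.sound h2).symm
  rw [SimpleGraph.mem_edgeSet, chainMap_adj]
  left
  refine ⟨hadj, ?_⟩
  rintro ⟨D, hD⟩
  rw [Sym2.eq_iff] at hD
  have hDC : D = C := by
    rcases hD with ⟨h1, _⟩ | ⟨h1, _⟩
    · rw [← entry_mk D, ← h1, hccp]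
    · rw [← exit_mk hne D, ← h1, hccp]
  apply hnd
  rw [hDC] at hD
  rw [Sym2.eq_iff]
  exact hD

lemma reach_chain_of_adj (hne : ∀ v : Fin n, (G.neighborSet v).Nonempty) (heven : ∀ v : Fin n, Even (G.degree v)) {x y : Fin n} (h : G.Adj x y) : (chainMap G).Reachable x y := by
  by_cases hdel : ∃ C : G.ConnectedComponent, s(x, y) = s(entry G C, exitV G C)
  · obtain ⟨C, hC⟩ := hdel
    rw [Sym2.eq_iff] at hC
    rcases hC with ⟨rfl, rfl⟩ | ⟨rfl, rfl⟩
    · exact reach_entry_exit hne heven C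
    · exact (reach_entry_exit hne heven C).symm
  · exact (chainMap_adj.mpr (Or.inl ⟨h, hdel⟩)).reachable

lemma reach_chain_of_reach (hne : ∀ v : Fin n, (G.neighborSet v).Nonempty) (heven : ∀ v : Fin n, Even (G.degree v)) {x y : Fin n} (h : G.Reachable x y) :
    (chainMap G).Reachable x y := by
  obtain ⟨w⟩ := h
  induction w with
  | nil => exact SimpleGraph.Reachable.refl _
  | cons h p ih => exact (reach_chain_of_adj hne heven h).trans ih

lemma reach_chain_same_comp (hne : ∀ v : Fin n, (G.neighborSet v).Nonempty) (heven : ∀ v : Fin n, Even (G.degree v)) {u v : Fin n}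
    (h : G.connectedComponentMk u = G.connectedComponentMk v) :
    (chainMap G).Reachable u v :=
  reach_chain_of_reach hne heven (SimpleGraph.ConnectedComponent.exact h)

lemma reach_chain_step (hne : ∀ v : Fin n, (G.neighborSet v).Nonempty) (heven : ∀ v : Fin n, Even (G.degree v)) (C : G.ConnectedComponent) :
    (chainMap G).Reachable (entry G C) (entry G (nextComp G C)) := by
  by_cases h : nextComp G C = C
  · rw [h]
  · refine (reach_entry_exit hne heven C).trans ?_
    refine SimpleGraph.Adj.reachable ?_
    rw [chainMap_adj]
    right
    refine ⟨⟨C, rfl⟩, fun he => h ?_⟩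
    rw [← entry_mk (nextComp G C), ← he, exit_mk hne C]

lemma chain_connected (hne : ∀ v : Fin n, (G.neighborSet v).Nonempty) (heven : ∀ v : Fin n, Even (G.degree v)) (hn0 : 0 < n) : (chainMap G).Connected := by
  have : Nonempty (Fin n) := ⟨⟨0, hn0⟩⟩
  rw [SimpleGraph.connected_iff]
  refine ⟨?_, inferInstance⟩
  have : Finite G.ConnectedComponent :=
    Finite.of_surjective (G.connectedComponentMk) (fun C => C.exists_rep)
  have : Nonempty G.ConnectedComponent := ⟨G.connectedComponentMk ⟨0, hn0⟩⟩
  obtain ⟨Cm, hCm⟩ := Finite.exists_max (entry G)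
  have climb : ∀ C : G.ConnectedComponent, (chainMap G).Reachable (entry G C) (entry G Cm) := by
    have key : ∀ (m : ℕ) (C : G.ConnectedComponent), n - (entry G C : ℕ) ≤ m →
        (chainMap G).Reachable (entry G C) (entry G Cm) := by
      intro m
      induction m with
      | zero =>
        intro C hC
        have := (entry G C).isLt
        omega
      | succ m ih =>
        intro C hC
        by_cases hC' : C = Cm
        · rw [hC']
        · have hlt : entry G C < entry G (nextComp G C) :=
            (entry_nextComp_big ⟨Cm, lt_of_le_of_ne (hCm C)
              (fun h => hC' (entry_injective h))⟩).1
          refine (reach_chain_step hne heven C).trans (ih (nextComp G C) ?_)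
          have h1 : (entry G C : ℕ) < (entry G (nextComp G C) : ℕ) := hlt
          have h2 := (entry G (nextComp G C)).isLt
          omega
    exact fun C => key n C (by omega)
  intro u v
  have hu : (chainMap G).Reachable u (entry G (G.connectedComponentMk u)) :=
    reach_chain_same_comp hne heven (entry_mk _).symm
  have hv : (chainMap G).Reachable v (entry G (G.connectedComponentMk v)) :=
    reach_chain_same_comp hne heven (entry_mk _).symm
  exact ((hu.trans (climb _)).trans (climb _).symm).trans hv.symm

lemma cc_adj {u v : Fin n} (h : G.Adj u v) :
    G.connectedComponentMk v = G.connectedComponentMk u :=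
  SimpleGraph.ConnectedComponent.connectedComponentMk_eq_of_adj h.symm

lemma exists_ne_of_two (hk : ∃ C D : G.ConnectedComponent, C ≠ D) (C : G.ConnectedComponent) :
    ∃ D : G.ConnectedComponent, D ≠ C := by
  obtain ⟨C1, C2, h⟩ := hk
  by_cases hC : C1 = C
  · exact ⟨C2, fun h2 => h (h2 ▸ hC)⟩
  · exact ⟨C1, hC⟩

lemma degree_entry (hne : ∀ v : Fin n, (G.neighborSet v).Nonempty) (hk : ∃ C D : G.ConnectedComponent, C ≠ D) (C : G.ConnectedComponent) :
    (chainMap G).degree (entry G C) = G.degree (entry G C) := by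
  obtain ⟨D, hD⟩ := nextComp_surjective (G := G) C
  have hDC : D ≠ C := by
    rintro rfl
    exact nextComp_ne (exists_ne_of_two hk D) hD
  have hnf : (chainMap G).neighborFinset (entry G C) =
      insert (exitV G D) ((G.neighborFinset (entry G C)).erase (exitV G C)) := by
    ext u
    rw [mem_neighborFinset, Finset.mem_insert, Finset.mem_erase, mem_neighborFinset,
      chainMap_adj]
    constructor
    · rintro (⟨hadj, hnodel⟩ | ⟨⟨E, hE⟩, hne'⟩)
      · refine Or.inr ⟨fun hu => hnodel ⟨C, by rw [hu]⟩, hadj⟩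
      · rw [Sym2.eq_iff] at hE
        rcases hE with ⟨h1, _⟩ | ⟨h1, h2⟩
        · exfalso
          have : E = C := by rw [← exit_mk hne E, ← h1, entry_mk]
          exact exit_ne_entry hne E (h1.symm.trans (by rw [this]))
        · have hED : E = D := nextComp_injective (G := G)
            (by rw [hD]; exact entry_injective h1.symm)
          left; rw [h2, hED]
    · rintro (rfl | ⟨hune, hadj⟩)
      · refine Or.inr ⟨⟨D, ?_⟩, fun he => hDC ?_⟩
        · rw [hD]; exact Sym2.eq_swap
        · rw [← exit_mk hne D, ← he, entry_mk]
      · refine Or.inl ⟨hadj, ?_⟩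
        rintro ⟨E, hE⟩
        rw [Sym2.eq_iff] at hE
        rcases hE with ⟨h1, h2⟩ | ⟨h1, h2⟩
        · have : E = C := by rw [← entry_mk E, ← h1, entry_mk]
          exact hune (by rw [h2, this])
        · have : E = C := by rw [← exit_mk hne E, ← h1, entry_mk]
          exact exit_ne_entry hne E (h1.symm.trans (by rw [this]))
  rw [← SimpleGraph.card_neighborFinset_eq_degree, ← SimpleGraph.card_neighborFinset_eq_degree,
    hnf]
  have hnotmem : exitV G D ∉ (G.neighborFinset (entry G C)).erase (exitV G C) := by
    intro hmem
    have hadj : G.Adj (entry G C) (exitV G D) := by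
      rw [← mem_neighborFinset]; exact Finset.mem_of_mem_erase hmem
    apply hDC
    rw [← exit_mk hne D, cc_adj hadj, entry_mk]
  rw [Finset.card_insert_of_notMem hnotmem,
    Finset.card_erase_of_mem (by rw [mem_neighborFinset]; exact exit_adj hne C)]
  have hpos : 0 < (G.neighborFinset (entry G C)).card :=
    Finset.card_pos.mpr ⟨exitV G C, by rw [mem_neighborFinset]; exact exit_adj hne C⟩
  omega

lemma degree_exit (hne : ∀ v : Fin n, (G.neighborSet v).Nonempty) (hk : ∃ C D : G.ConnectedComponent, C ≠ D) (C : G.ConnectedComponent) :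
    (chainMap G).degree (exitV G C) = G.degree (exitV G C) := by
  have hNC : nextComp G C ≠ C := nextComp_ne (exists_ne_of_two hk C)
  have hnf : (chainMap G).neighborFinset (exitV G C) =
      insert (entry G (nextComp G C)) ((G.neighborFinset (exitV G C)).erase (entry G C)) := by
    ext u
    rw [mem_neighborFinset, Finset.mem_insert, Finset.mem_erase, mem_neighborFinset,
      chainMap_adj]
    constructor
    · rintro (⟨hadj, hnodel⟩ | ⟨⟨E, hE⟩, hne'⟩)
      · refine Or.inr ⟨fun hu => hnodel ⟨C, by rw [hu]; exact Sym2.eq_swap⟩, hadj⟩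
      · rw [Sym2.eq_iff] at hE
        rcases hE with ⟨h1, h2⟩ | ⟨h1, _⟩
        · have : E = C := by rw [← exit_mk hne E, ← h1, exit_mk hne]
          left; rw [h2, this]
        · exfalso
          have : nextComp G E = C := by rw [← entry_mk (nextComp G E), ← h1, exit_mk hne]
          exact exit_ne_entry hne C (h1.trans (by rw [this]))
    · rintro (rfl | ⟨hune, hadj⟩)
      · refine Or.inr ⟨⟨C, rfl⟩, fun he => hNC ?_⟩
        rw [← entry_mk (nextComp G C), ← he, exit_mk hne]
      · refine Or.inl ⟨hadj, ?_⟩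
        rintro ⟨E, hE⟩
        rw [Sym2.eq_iff] at hE
        rcases hE with ⟨h1, h2⟩ | ⟨h1, h2⟩
        · have : E = C := by rw [← entry_mk E, ← h1, exit_mk hne]
          exact exit_ne_entry hne C (h1.trans (by rw [this]))
        · have : E = C := by rw [← exit_mk hne E, ← h1, exit_mk hne]
          exact hune (by rw [h2, this])
  rw [← SimpleGraph.card_neighborFinset_eq_degree, ← SimpleGraph.card_neighborFinset_eq_degree,
    hnf]
  have hnotmem : entry G (nextComp G C) ∉ (G.neighborFinset (exitV G C)).erase (entry G C) := by
    intro hmem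
    have hadj : G.Adj (exitV G C) (entry G (nextComp G C)) := by
      rw [← mem_neighborFinset]; exact Finset.mem_of_mem_erase hmem
    apply hNC
    rw [← entry_mk (nextComp G C), cc_adj hadj, exit_mk hne]
  rw [Finset.card_insert_of_notMem hnotmem,
    Finset.card_erase_of_mem (by rw [mem_neighborFinset]; exact (exit_adj hne C).symm)]
  have hpos : 0 < (G.neighborFinset (exitV G C)).card :=
    Finset.card_pos.mpr ⟨entry G C, by rw [mem_neighborFinset]; exact (exit_adj hne C).symm⟩
  omega

lemma degree_other (hne : ∀ v : Fin n, (G.neighborSet v).Nonempty) (v : Fin n) (hv1 : v ≠ entry G (G.connectedComponentMk v))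
    (hv2 : v ≠ exitV G (G.connectedComponentMk v)) :
    (chainMap G).degree v = G.degree v := by
  have hnf : (chainMap G).neighborFinset v = G.neighborFinset v := by
    ext u
    rw [mem_neighborFinset, mem_neighborFinset, chainMap_adj]
    constructor
    · rintro (⟨hadj, _⟩ | ⟨⟨E, hE⟩, hne'⟩)
      · exact hadj
      · exfalso
        rw [Sym2.eq_iff] at hE
        rcases hE with ⟨h1, _⟩ | ⟨h1, _⟩
        · have : E = G.connectedComponentMk v := by rw [← exit_mk hne E, ← h1]
          exact hv2 (by rw [← this, h1])
        · have : nextComp G E = G.connectedComponentMk v := by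
            rw [← entry_mk (nextComp G E), ← h1]
          exact hv1 (by rw [← this, h1])
    · intro hadj
      refine Or.inl ⟨hadj, ?_⟩
      rintro ⟨E, hE⟩
      rw [Sym2.eq_iff] at hE
      rcases hE with ⟨h1, _⟩ | ⟨h1, _⟩
      · have : E = G.connectedComponentMk v := by rw [← entry_mk E, ← h1]
        exact hv1 (by rw [← this, h1])
      · have : E = G.connectedComponentMk v := by rw [← exit_mk hne E, ← h1]
        exact hv2 (by rw [← this, h1])
  rw [← SimpleGraph.card_neighborFinset_eq_degree, ← SimpleGraph.card_neighborFinset_eq_degree,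
    hnf]

lemma chain_degree (hne : ∀ v : Fin n, (G.neighborSet v).Nonempty) (hk : ∃ C D : G.ConnectedComponent, C ≠ D) (v : Fin n) : (chainMap G).degree v = G.degree v := by
  by_cases h1 : v = entry G (G.connectedComponentMk v)
  · rw [h1]; exact degree_entry hne hk _
  · by_cases h2 : v = exitV G (G.connectedComponentMk v)
    · rw [h2]; exact degree_exit hne hk _
    · exact degree_other hne v h1 h2

lemma chainMap_eq_self (hne : ∀ v : Fin n, (G.neighborSet v).Nonempty)
    (hall : ∀ C D : G.ConnectedComponent, C = D) : chainMap G = G := by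
  ext a b
  rw [chainMap_adj]
  constructor
  · rintro (⟨h, _⟩ | ⟨⟨C, hC⟩, hne'⟩)
    · exact h
    · rw [hall (nextComp G C) C] at hC
      rw [Sym2.eq_iff] at hC
      rcases hC with ⟨rfl, rfl⟩ | ⟨rfl, rfl⟩
      · exact (exit_adj hne C).symm
      · exact exit_adj hne C
  · intro h
    by_cases hdel : ∃ C : G.ConnectedComponent, s(a, b) = s(entry G C, exitV G C)
    · obtain ⟨C, hC⟩ := hdel
      refine Or.inr ⟨⟨C, ?_⟩, h.ne⟩
      rw [hall (nextComp G C) C, hC]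
      exact Sym2.eq_swap
    · exact Or.inl ⟨h, hdel⟩

end ChainAux

open ChainAux in
/-- Let `r ≥ 2` and `n ≥ max{8, 2r+1}`, let `Ω_S` be the set of all
`2r`-regular simple graphs on `{1,…,n}` and `Ω_F` the subset of connected such graphs,
and let `h` be the chaining map.  Then `h(G_S)` is connected and `2r`-regular for every
`G_S ∈ Ω_S`, and `h` is a surjection onto `Ω_F`. -/
theorem chainMap_into_and_onto (r n : ℕ) (hr : 2 ≤ r) (h8 : 8 ≤ n) (hn : 2 * r + 1 ≤ n) :
    (∀ GS : SimpleGraph (Fin n), GS.IsRegularOfDegree (2 * r) →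
      (chainMap GS).Connected ∧ (chainMap GS).IsRegularOfDegree (2 * r)) ∧
    (∀ G : SimpleGraph (Fin n), G.Connected → G.IsRegularOfDegree (2 * r) →
      ∃ GS : SimpleGraph (Fin n), GS.IsRegularOfDegree (2 * r) ∧ chainMap GS = G) := by
  have hne0 : ∀ (G : SimpleGraph (Fin n)), G.IsRegularOfDegree (2 * r) →
      ∀ v : Fin n, (G.neighborSet v).Nonempty := by
    intro G hreg v
    have h1 : 0 < G.degree v := by rw [hreg v]; omega
    rw [← SimpleGraph.card_neighborFinset_eq_degree] at h1
    obtain ⟨w, hw⟩ := Finset.card_pos.mp h1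
    exact ⟨w, by rw [SimpleGraph.mem_neighborSet, ← SimpleGraph.mem_neighborFinset]; exact hw⟩
  constructor
  · intro GS hreg
    have hne := hne0 GS hreg
    have heven : ∀ v : Fin n, Even (GS.degree v) := by
      intro v; rw [hreg v]; exact ⟨r, two_mul r⟩
    refine ⟨chain_connected hne heven (by omega), ?_⟩
    by_cases hk : ∃ C D : GS.ConnectedComponent, C ≠ D
    · intro v
      rw [chain_degree hne hk v]
      exact hreg v
    · push_neg at hk
      rw [chainMap_eq_self hne hk]
      exact hreg
  · intro G hconn hreg
    refine ⟨G, hreg, chainMap_eq_self (hne0 G hreg) ?_⟩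
    intro C D
    obtain ⟨c, hc⟩ := C.exists_rep
    obtain ⟨d, hd⟩ := D.exists_rep
    rw [← hc, ← hd]
    exact SimpleGraph.ConnectedComponent.sound (hconn.preconnected c d)


end
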